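/- Let I ⊆ ℝ be an interval, τ : I → ℝ continuous, c₄, c₅ ∈ ℝ, and let u : I → ℝ be an antiderivative of τ plus the constant c₅. Define m₂(s) = (1/4)e^{−u(s)}(−4c₄ + e^{2u(s)}) and m₁(s) = (1/4)e^{−u(s)}(−4c₄ + e^{2u(s)}) − (1/2)e^{u(s)}. Then m₂'(s) + τ(s)m₁(s) = 0 for all s ∈ I, and m₂(s)² − m₁(s)² = −c₄ for all s ∈ I; in particular m₂² − m₁² is constant, so a curve α = (s + c₀)T + m₁N + m₂B with these components is an N-constant curve in the pseudo-Galilean space G¹₃, of second kind when c₄ ≠ 0. -/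

import Mathlib

/-- With `u = (antiderivative of τ) + c₅`,
`m₂ s = (1/4) e^{-u s} (-4 c₄ + e^{2 u s})` and `m₁ s = m₂ s - (1/2) e^{u s}` satisfy
`m₂' + τ m₁ = 0` and `m₂² - m₁² = -c₄` on `I`; in particular `m₂² - m₁²` is constant,
so a curve `α = (s + c₀) T + m₁ N + m₂ B` with these components is an N-constant curve
in `G¹₃`, of second kind when `c₄ ≠ 0`. -/
theorem stmt_10
    (I : Set ℝ) (hIconv : Convex ℝ I)
    (τ : ℝ → ℝ) (hτ : ContinuousOn τ I)
    (c₀ c₄ c₅ : ℝ)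
    (F : ℝ → ℝ) (hF : ∀ s ∈ I, HasDerivAt F (τ s) s)
    (u : ℝ → ℝ) (hu : ∀ s : ℝ, u s = F s + c₅)
    (m₁ m₂ : ℝ → ℝ)
    (hm₂ : ∀ s : ℝ, m₂ s = (1/4) * Real.exp (-u s) * (-4 * c₄ + Real.exp (2 * u s)))
    (hm₁ : ∀ s : ℝ, m₁ s =
      (1/4) * Real.exp (-u s) * (-4 * c₄ + Real.exp (2 * u s)) - (1/2) * Real.exp (u s)) :
    (∀ s ∈ I, HasDerivAt m₂ (-(τ s * m₁ s)) s) ∧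
    (∀ s ∈ I, (m₂ s) ^ 2 - (m₁ s) ^ 2 = -c₄) ∧
    ∃ c : ℝ, ∀ s ∈ I, (m₂ s) ^ 2 - (m₁ s) ^ 2 = c := by
  have hue : u = fun x => F x + c₅ := funext hu
  have hconst : ∀ s ∈ I, (m₂ s) ^ 2 - (m₁ s) ^ 2 = -c₄ := by
    intro s _
    rw [hm₂ s, hm₁ s]
    have h1 : Real.exp (-u s) * Real.exp (u s) = 1 := by
      rw [← Real.exp_add]; simp
    have h2 : Real.exp (2 * u s) = Real.exp (u s) * Real.exp (u s) := by
      rw [← Real.exp_add]; ring_nf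
    nlinarith [h1, h2]
  refine ⟨?_, hconst, ⟨-c₄, hconst⟩⟩
  intro s hs
  have hud : HasDerivAt u (τ s) s := by
    rw [hue]; exact (hF s hs).add_const c₅
  have hme : m₂ = fun x => (1/4) * Real.exp (-u x) * (-4 * c₄ + Real.exp (2 * u x)) :=
    funext hm₂
  have hd1 : HasDerivAt (fun x => Real.exp (-u x)) (Real.exp (-u s) * (-τ s)) s :=
    by have := (Real.hasDerivAt_exp (-u s)).comp s hud.neg; exact this
  have hd2 : HasDerivAt (fun x => Real.exp (2 * u x)) (Real.exp (2 * u s) * (2 * τ s)) s :=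
    by have := (Real.hasDerivAt_exp (2 * u s)).comp s (hud.const_mul 2); exact this
  have hD : HasDerivAt m₂
      ((1/4) * (Real.exp (-u s) * (-τ s)) * (-4 * c₄ + Real.exp (2 * u s))
        + (1/4) * Real.exp (-u s) * (Real.exp (2 * u s) * (2 * τ s))) s := by
    rw [hme]
    have := ((hd1.const_mul (1/4)).fun_mul ((hasDerivAt_const s (-4*c₄)).fun_add hd2))
    exact this.congr_deriv (by ring)
  convert hD using 1
  rw [hm₁ s]
  have h1 : Real.exp (-u s) * Real.exp (u s) = 1 := by
    rw [← Real.exp_add]; simp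
  have h3 : Real.exp (-u s) * Real.exp (2 * u s) = Real.exp (u s) := by
    rw [← Real.exp_add]; ring_nf
  linear_combination (-(τ s)/2) * h3
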